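/- arXiv:1205.4342 — 4 statements merged into one kernel-verified Lean document; each statement's English description precedes it below -/
import Mathlib

section
/- If U : [0,1] → ℝ is concave and ℓ ≥ 2 is an integer, then (1/ℓ)·∑_{j=0}^{ℓ−1} U(j/(ℓ−1)) ≤ ∫₀¹ U(t) dt. -/
private lemma chord_le {U : ℝ → ℝ} (hU : ConcaveOn ℝ (Set.Icc 0 1) U)
    {a b t : ℝ} (hab : a < b) (ha : a ∈ Set.Icc (0:ℝ) 1) (hb : b ∈ Set.Icc (0:ℝ) 1)
    (ht : t ∈ Set.Icc a b) :
    ((b - t) * U a + (t - a) * U b) / (b - a) ≤ U t := by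
  have hba : (0:ℝ) < b - a := by linarith
  have hw1 : 0 ≤ (b - t) / (b - a) := div_nonneg (by linarith [ht.2]) hba.le
  have hw2 : 0 ≤ (t - a) / (b - a) := div_nonneg (by linarith [ht.1]) hba.le
  have hsum : (b - t) / (b - a) + (t - a) / (b - a) = 1 := by
    field_simp
    ring
  have key := hU.2 ha hb hw1 hw2 hsum
  have hx : ((b - t) / (b - a)) • a + ((t - a) / (b - a)) • b = t := by
    simp only [smul_eq_mul]
    field_simp
    ring
  rw [hx] at key
  calc ((b - t) * U a + (t - a) * U b) / (b - a)
      = ((b - t) / (b - a)) • U a + ((t - a) / (b - a)) • U b := by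
        simp only [smul_eq_mul]; ring
    _ ≤ U t := key

private lemma trap {U : ℝ → ℝ} (hU : ConcaveOn ℝ (Set.Icc 0 1) U)
    (hcont : ContinuousOn U (Set.Icc 0 1)) {a b : ℝ} (hab : a < b)
    (ha : a ∈ Set.Icc (0:ℝ) 1) (hb : b ∈ Set.Icc (0:ℝ) 1) :
    (b - a) * (U a + U b) / 2 ≤ ∫ t in a..b, U t := by
  have hba : (0:ℝ) < b - a := by linarith
  have hsub : Set.Icc a b ⊆ Set.Icc 0 1 := Set.Icc_subset_Icc ha.1 hb.2
  have hint : IntervalIntegrable U MeasureTheory.volume a b := by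
    apply ContinuousOn.intervalIntegrable
    rw [Set.uIcc_of_le hab.le]
    exact hcont.mono hsub
  set L : ℝ → ℝ := fun t => ((b - t) * U a + (t - a) * U b) / (b - a) with hL
  have hLc : Continuous L := by
    apply Continuous.div_const
    fun_prop
  have hLint : IntervalIntegrable L MeasureTheory.volume a b := hLc.intervalIntegrable a b
  have hmono : (∫ t in a..b, L t) ≤ ∫ t in a..b, U t := by
    apply intervalIntegral.integral_mono_on hab.le hLint hint
    intro t ht
    exact chord_le hU hab ha hb ht
  have hLval : (∫ t in a..b, L t) = (b - a) * (U a + U b) / 2 := by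
    have hLeq : L = fun t => (b * U a - a * U b) / (b - a) + ((U b - U a) / (b - a)) * t := by
      funext t
      rw [hL]
      field_simp
      ring
    rw [hLeq]
    rw [intervalIntegral.integral_add (intervalIntegrable_const)
      ((intervalIntegral.intervalIntegrable_id).const_mul _)]
    rw [intervalIntegral.integral_const, intervalIntegral.integral_const_mul,
      integral_id]
    simp only [smul_eq_mul]
    field_simp
    ring
  linarith

theorem stmt_1 (U : ℝ → ℝ) (hU : ConcaveOn ℝ (Set.Icc 0 1) U)
    (hcont : ContinuousOn U (Set.Icc 0 1)) (ℓ : ℕ) (hℓ : 2 ≤ ℓ) :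
    (1 / (ℓ : ℝ)) * ∑ j ∈ Finset.range ℓ, U ((j : ℝ) / ((ℓ : ℝ) - 1)) ≤
      ∫ t in (0:ℝ)..1, U t := by
  obtain ⟨n, rfl⟩ : ∃ n, ℓ = n + 1 := ⟨ℓ - 1, by omega⟩
  have hn : 1 ≤ n := by omega
  have hmpos : (0:ℝ) < (n:ℝ) := by exact_mod_cast hn
  set m : ℝ := (n : ℝ) with hm
  set a : ℕ → ℝ := fun i => (i : ℝ) / m with haa
  have hcast : ((n + 1 : ℕ) : ℝ) - 1 = m := by push_cast; ring
  have hmem : ∀ i ≤ n, a i ∈ Set.Icc (0:ℝ) 1 := by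
    intro i hi
    constructor
    · exact div_nonneg (by positivity) hmpos.le
    · rw [haa]
      simp only
      rw [div_le_one hmpos, hm]
      exact_mod_cast hi
  have hlt : ∀ i, a i < a (i + 1) := by
    intro i
    rw [haa]
    simp only
    rw [div_lt_div_iff_of_pos_right hmpos]
    push_cast
    linarith
  have ha0 : a 0 = 0 := by simp [haa]
  have han : a n = 1 := by
    rw [haa]
    simp only
    rw [hm, div_self hmpos.ne']
  -- split the integral
  have hint2 : ∀ i < n, IntervalIntegrable U MeasureTheory.volume (a i) (a (i + 1)) := by
    intro i hi
    apply ContinuousOn.intervalIntegrable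
    rw [Set.uIcc_of_le (hlt i).le]
    exact hcont.mono (Set.Icc_subset_Icc (hmem i hi.le).1 (hmem (i + 1) hi).2)
  have hsplit := intervalIntegral.sum_integral_adjacent_intervals hint2
  rw [ha0, han] at hsplit
  -- each piece bounded below by a trapezoid
  have hstep : ∀ i ∈ Finset.range n,
      (1 / m) * (U (a i) + U (a (i + 1))) / 2 ≤ ∫ t in a i..a (i + 1), U t := by
    intro i hi
    rw [Finset.mem_range] at hi
    have := trap hU hcont (hlt i) (hmem i hi.le) (hmem (i + 1) hi)
    have hd : a (i + 1) - a i = 1 / m := by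
      rw [haa]
      simp only
      push_cast
      field_simp
      ring
    rw [hd] at this
    exact this
  have hsumle := Finset.sum_le_sum hstep
  rw [hsplit] at hsumle
  set S : ℝ := ∑ j ∈ Finset.range (n + 1), U (a j) with hS
  -- telescoping-ish identity
  have hA : ∑ i ∈ Finset.range n, U (a i) = S - U (a n) := by
    rw [hS, Finset.sum_range_succ]; ring
  have hB : ∑ i ∈ Finset.range n, U (a (i + 1)) = S - U (a 0) := by
    rw [hS, Finset.sum_range_succ']; ring
  have hsumval : ∑ i ∈ Finset.range n, (1 / m) * (U (a i) + U (a (i + 1))) / 2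
      = (1 / m) * (2 * S - U (a 0) - U (a n)) / 2 := by
    have : ∑ i ∈ Finset.range n, (1 / m) * (U (a i) + U (a (i + 1))) / 2
        = (1 / m) * ((∑ i ∈ Finset.range n, U (a i)) + ∑ i ∈ Finset.range n, U (a (i + 1))) / 2 := by
      rw [← Finset.sum_add_distrib, Finset.mul_sum, Finset.sum_div]
    rw [this, hA, hB]; ring
  rw [hsumval] at hsumle
  -- concavity endpoint bound: 2S ≥ (n+1)(U 0 + U 1)
  have h0 : (0:ℝ) ∈ Set.Icc (0:ℝ) 1 := by norm_num
  have h1 : (1:ℝ) ∈ Set.Icc (0:ℝ) 1 := by norm_num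
  have hpt : ∀ j ∈ Finset.range (n + 1),
      (1 - (j:ℝ) / m) * U 0 + ((j:ℝ) / m) * U 1 ≤ U (a j) := by
    intro j hj
    rw [Finset.mem_range] at hj
    have hw2 : 0 ≤ (j:ℝ) / m := by positivity
    have hw1 : 0 ≤ 1 - (j:ℝ) / m := by
      have := (hmem j (by omega)).2
      rw [haa] at this
      simp only at this
      linarith
    have key := hU.2 h0 h1 hw1 hw2 (by ring)
    simp only [smul_eq_mul, mul_zero, mul_one, zero_add] at key
    rw [haa]
    simp only
    exact key
  have hgauss : ∑ j ∈ Finset.range (n + 1), ((j:ℝ) / m) = ((n:ℝ) + 1) / 2 := by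
    rw [← Finset.sum_div]
    have h2 : (∑ j ∈ Finset.range (n + 1), (j:ℝ)) = (n:ℝ) * ((n:ℝ) + 1) / 2 := by
      have := Finset.sum_range_id_mul_two (n + 1)
      have h3 : ((∑ i ∈ Finset.range (n + 1), i) * 2 : ℕ) = ((n + 1) * n : ℕ) := by
        rw [this]; simp
      have h4 : ((∑ i ∈ Finset.range (n + 1), i : ℕ) : ℝ) * 2 = ((n:ℝ) + 1) * n := by
        exact_mod_cast h3
      push_cast at h4 ⊢
      linarith
    rw [h2, hm]
    field_simp
  have hSlb : ((n:ℝ) + 1) / 2 * (U 0 + U 1) ≤ S := by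
    have hle := Finset.sum_le_sum hpt
    rw [← hS] at hle
    have hval : ∑ j ∈ Finset.range (n + 1), ((1 - (j:ℝ) / m) * U 0 + ((j:ℝ) / m) * U 1)
        = ((n:ℝ) + 1) / 2 * (U 0 + U 1) := by
      rw [Finset.sum_add_distrib]
      simp only [sub_mul, one_mul]
      rw [Finset.sum_sub_distrib, Finset.sum_const, Finset.card_range,
        ← Finset.sum_mul, ← Finset.sum_mul, hgauss]
      push_cast
      ring
    linarith [hval ▸ hle]
  -- finish
  have hgoal : (1 / ((n:ℝ) + 1)) * S ≤ (1 / m) * (2 * S - U (a 0) - U (a n)) / 2 := by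
    rw [ha0, han]
    rw [div_mul_eq_mul_div, div_mul_eq_mul_div, div_div, div_le_div_iff₀ (by positivity) (by positivity)]
    have : (n:ℝ) + 1 > 0 := by positivity
    nlinarith [hSlb]
  have hfinal : (1 / ((n:ℝ) + 1)) * S ≤ ∫ t in (0:ℝ)..1, U t := le_trans hgoal hsumle
  have hsumeq : ∑ j ∈ Finset.range (n + 1), U ((j : ℝ) / (((n:ℕ) + 1 : ℕ) - 1 : ℝ)) = S := by
    rw [hS]
    apply Finset.sum_congr rfl
    intro j _
    rw [haa]
    push_cast
    norm_num
    rfl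
  push_cast
  push_cast at hsumeq
  rw [hsumeq]
  exact hfinal
end

section
/- Let f : [0,1] → ℝ be defined by f(t) = (t/(1−t))·log₂(1/t) for t ∈ (0,1), f(0) = 0, and f(1) = log₂ e. Then f is concave on [0,1]. -/
open Real Set Filter Topology

private lemma log2_pos' : (0:ℝ) < Real.log 2 := Real.log_pos (by norm_num)

private noncomputable def gA : ℝ → ℝ := fun t => -(t * Real.log t)/((1-t)*Real.log 2)
private noncomputable def gB : ℝ → ℝ := fun t => (t - 1 - Real.log t)/((1-t)^2 * Real.log 2)
private noncomputable def gC : ℝ → ℝ :=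
  fun t => (t^2 - 1 - 2*t*Real.log t)/((t*(1-t)^3) * Real.log 2)

private lemma gA_eq (t : ℝ) : (t / (1 - t)) * Real.logb 2 (1 / t) = gA t := by
  rw [Real.logb, one_div, Real.log_inv, gA]
  rw [div_mul_div_comm, mul_neg, neg_div]

private lemma hAux_deriv (t : ℝ) (ht : 0 < t) :
    HasDerivAt (fun s : ℝ => Real.log s - (s^2 - 1)/(2*s)) (-(t-1)^2/(2*t^2)) t := by
  have h1 : HasDerivAt (fun s : ℝ => s^2 - 1) (2*t) t := by
    simpa using (hasDerivAt_pow 2 t).sub_const 1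
  have h2 : HasDerivAt (fun s : ℝ => 2*s) 2 t := by
    simpa using (hasDerivAt_id t).const_mul 2
  have h3 := h1.div h2 (by positivity)
  have h4 := (Real.hasDerivAt_log ht.ne').sub h3
  refine h4.congr_deriv ?_
  field_simp
  ring

private lemma key_ineq (x : ℝ) (hx : 0 < x) (hx1 : x ≤ 1) :
    x^2 - 1 - 2*x*Real.log x ≤ 0 := by
  set h : ℝ → ℝ := fun s => Real.log s - (s^2 - 1)/(2*s) with hh
  have anti : AntitoneOn h (Icc x 1) := by
    apply antitoneOn_of_deriv_nonpos (convex_Icc _ _)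
    · intro t ht
      exact (hAux_deriv t (lt_of_lt_of_le hx ht.1)).continuousAt.continuousWithinAt
    · rw [interior_Icc]
      intro t ht
      exact (hAux_deriv t (hx.trans ht.1)).differentiableAt.differentiableWithinAt
    · rw [interior_Icc]
      intro t ht
      have ht0 : (0:ℝ) < t := hx.trans ht.1
      rw [(hAux_deriv t ht0).deriv]
      have h1 : (0:ℝ) < 2*t^2 := by positivity
      have h2 : (0:ℝ) ≤ (t-1)^2 := sq_nonneg _
      exact div_nonpos_of_nonpos_of_nonneg (by linarith) h1.le
  have hle : h 1 ≤ h x := anti ⟨le_refl x, hx1⟩ ⟨hx1, le_refl 1⟩ hx1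
  have h1 : h 1 = 0 := by simp [hh]
  have hx2 : (x^2 - 1)/(2*x) ≤ Real.log x := by
    rw [h1] at hle; simp only [hh] at hle; linarith
  rw [div_le_iff₀ (by positivity : (0:ℝ) < 2*x)] at hx2
  nlinarith

private lemma gA_deriv (x : ℝ) (hx0 : 0 < x) (hx1 : x < 1) : HasDerivAt gA (gB x) x := by
  have hnum : HasDerivAt (fun t : ℝ => -(t * Real.log t)) (-(1 * Real.log x + x * x⁻¹)) x :=
    ((hasDerivAt_id x).mul (Real.hasDerivAt_log hx0.ne')).neg
  have hden : HasDerivAt (fun t : ℝ => (1-t)*Real.log 2) ((0-1)*Real.log 2) x :=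
    ((hasDerivAt_const x 1).sub (hasDerivAt_id x)).mul_const _
  have hd0 : (1-x)*Real.log 2 ≠ 0 := by
    have := log2_pos'; have : (0:ℝ) < 1 - x := by linarith
    positivity
  have h := hnum.div hden hd0
  refine h.congr_deriv ?_
  rw [gB]
  have h1 : (1:ℝ) - x ≠ 0 := by intro h; linarith [h]
  field_simp
  ring

private lemma gB_deriv (x : ℝ) (hx0 : 0 < x) (hx1 : x < 1) : HasDerivAt gB (gC x) x := by
  have hnum : HasDerivAt (fun t : ℝ => t - 1 - Real.log t) (1 - x⁻¹) x :=
    ((hasDerivAt_id x).sub_const 1).sub (Real.hasDerivAt_log hx0.ne')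
  have hden : HasDerivAt (fun t : ℝ => (1-t)^2 * Real.log 2)
      ((↑2 * (1-x)^(2-1) * (0-1)) * Real.log 2) x :=
    (((hasDerivAt_const x 1).sub (hasDerivAt_id x)).pow 2).mul_const _
  have h1x : (0:ℝ) < 1 - x := by linarith
  have hd0 : (1-x)^2 * Real.log 2 ≠ 0 := by have := log2_pos'; positivity
  have h := hnum.div hden hd0
  refine h.congr_deriv ?_
  rw [gC]
  have hl2 := log2_pos'
  field_simp
  ring

private lemma gC_nonpos (x : ℝ) (hx0 : 0 < x) (hx1 : x < 1) : gC x ≤ 0 := by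
  rw [gC]
  have h1x : (0:ℝ) < 1 - x := by linarith
  have hden : (0:ℝ) < (x*(1-x)^3) * Real.log 2 := by have := log2_pos'; positivity
  exact div_nonpos_of_nonpos_of_nonneg (key_ineq x hx0 hx1.le) hden.le

private lemma gA_tendsto_zero : Tendsto gA (𝓝[>] (0:ℝ)) (𝓝 0) := by
  have hA : Tendsto (fun t : ℝ => Real.log t * t) (𝓝[>] (0:ℝ)) (𝓝 0) := by
    have := tendsto_log_mul_rpow_nhdsGT_zero (r := 1) one_pos
    simpa [Real.rpow_one] using this
  have hB : Tendsto (fun t : ℝ => ((1-t)*Real.log 2)⁻¹) (𝓝[>] (0:ℝ))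
      (𝓝 (((1-(0:ℝ))*Real.log 2)⁻¹)) := by
    apply Tendsto.mono_left _ nhdsWithin_le_nhds
    apply (ContinuousAt.inv₀ _ _)
    · exact (continuousAt_const.sub continuousAt_id).mul continuousAt_const
    · have := log2_pos'
      simp only [sub_zero, one_mul]
      exact this.ne'
  have h := (hA.neg.mul hB)
  rw [neg_zero, zero_mul] at h
  refine h.congr (fun t => ?_)
  simp only [gA, div_eq_mul_inv]
  ring

private lemma gA_tendsto_one :
    Tendsto gA (𝓝[Set.Ico (0:ℝ) 1] 1) (𝓝 (Real.logb 2 (Real.exp 1))) := by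
  have hs : Tendsto (fun t : ℝ => Real.log t / (t - 1)) (𝓝[≠] (1:ℝ)) (𝓝 1) := by
    have h := hasDerivAt_iff_tendsto_slope.mp (Real.hasDerivAt_log one_ne_zero)
    simp only [slope_fun_def, Real.log_one, inv_one] at h
    refine h.congr (fun t => ?_)
    simp [sub_zero, smul_eq_mul, div_eq_inv_mul]
  have ht : Tendsto (fun t : ℝ => t / Real.log 2) (𝓝[≠] (1:ℝ)) (𝓝 (1 / Real.log 2)) :=
    (continuousAt_id.div continuousAt_const log2_pos'.ne').tendsto.mono_left nhdsWithin_le_nhds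
  have h := ht.mul hs
  rw [mul_one] at h
  have hmono : 𝓝[Set.Ico (0:ℝ) 1] 1 ≤ 𝓝[≠] (1:ℝ) :=
    nhdsWithin_mono _ (fun t ht => ne_of_lt ht.2)
  have h2 := h.mono_left hmono
  have hval : Real.logb 2 (Real.exp 1) = 1 / Real.log 2 := by
    rw [Real.logb, Real.log_exp]
  rw [hval]
  refine h2.congr' ?_
  filter_upwards [eventually_mem_nhdsWithin] with t ht
  have ht1 : t - 1 ≠ 0 := sub_ne_zero.mpr (ne_of_lt ht.2)
  have ht2 : (1:ℝ) - t ≠ 0 := sub_ne_zero.mpr (ne_of_gt ht.2)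
  have hl2 := log2_pos'.ne'
  simp only [gA]
  field_simp
  ring

theorem stmt_3 (f : ℝ → ℝ) (h0 : f 0 = 0) (h1 : f 1 = Real.logb 2 (Real.exp 1))
    (hf : ∀ t ∈ Set.Ioo (0:ℝ) 1, f t = (t / (1 - t)) * Real.logb 2 (1 / t)) :
    ConcaveOn ℝ (Set.Icc 0 1) f := by
  have hfeq : ∀ t ∈ Set.Ioo (0:ℝ) 1, f t = gA t := fun t ht => (hf t ht).trans (gA_eq t)
  refine concaveOn_of_hasDerivWithinAt2_nonpos (f' := gB) (f'' := gC) (convex_Icc 0 1)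
    ?_ ?_ ?_ ?_
  · -- continuity
    intro x hx
    rcases hx.1.eq_or_lt with h0x | h0x
    · subst h0x
      rw [← continuousWithinAt_diff_self, Set.Icc_diff_left]
      show Tendsto f (𝓝[Set.Ioc (0:ℝ) 1] 0) (𝓝 (f 0))
      rw [h0]
      have hm : 𝓝[Set.Ioc (0:ℝ) 1] 0 ≤ 𝓝[>] (0:ℝ) :=
        nhdsWithin_mono _ (fun t ht => ht.1)
      refine (gA_tendsto_zero.mono_left hm).congr' ?_
      have hlt : ∀ᶠ t in 𝓝[Set.Ioc (0:ℝ) 1] 0, t < 1 :=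
        eventually_nhdsWithin_of_eventually_nhds (eventually_lt_nhds one_pos)
      filter_upwards [eventually_mem_nhdsWithin, hlt] with t ht htlt
      exact (hfeq t ⟨ht.1, htlt⟩).symm
    · rcases hx.2.eq_or_lt with h1x | h1x
      · subst h1x
        rw [← continuousWithinAt_diff_self, Set.Icc_sdiff_right]
        show Tendsto f (𝓝[Set.Ico (0:ℝ) 1] 1) (𝓝 (f 1))
        rw [h1]
        refine gA_tendsto_one.congr' ?_
        have hgt : ∀ᶠ t in 𝓝[Set.Ico (0:ℝ) 1] 1, (0:ℝ) < t :=
          eventually_nhdsWithin_of_eventually_nhds (eventually_gt_nhds one_pos)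
        filter_upwards [eventually_mem_nhdsWithin, hgt] with t ht htgt
        exact (hfeq t ⟨htgt, ht.2⟩).symm
      · -- interior point
        have hmem : Set.Ioo (0:ℝ) 1 ∈ 𝓝 x := isOpen_Ioo.mem_nhds ⟨h0x, h1x⟩
        have hEq : f =ᶠ[𝓝 x] gA := by
          filter_upwards [hmem] with t ht
          exact hfeq t ht
        have hcont : ContinuousAt gA x := by
          have hden : (1-x)*Real.log 2 ≠ 0 := by
            have := log2_pos'; have : (0:ℝ) < 1 - x := by linarith
            positivity
          exact ((continuousAt_id.mul (Real.continuousAt_log h0x.ne')).neg).div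
            ((continuousAt_const.sub continuousAt_id).mul continuousAt_const) hden
        exact (hcont.congr hEq.symm).continuousWithinAt
  · rw [interior_Icc]
    intro x hx
    have hEq : f =ᶠ[𝓝 x] gA := by
      filter_upwards [isOpen_Ioo.mem_nhds hx] with t ht
      exact hfeq t ht
    exact (((gA_deriv x hx.1 hx.2).congr_of_eventuallyEq hEq)).hasDerivWithinAt
  · rw [interior_Icc]
    intro x hx
    exact (gB_deriv x hx.1 hx.2).hasDerivWithinAt
  · rw [interior_Icc]
    intro x hx
    exact gC_nonpos x hx.1 hx.2
end

section
/- Let f be the function with f(t) = (t/(1−t))·log₂(1/t) on (0,1), f(0) = 0, f(1) = log₂ e. Then f is concave with f(0) = 0, and consequently for all a, b ≥ 0 with a + b ≤ 1, f(a + b) − f(a) ≤ f(b). -/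
open Real Set Filter Topology

private lemma psi_hasDeriv {x : ℝ} (hx : x ≠ 0) :
    HasDerivAt (fun t : ℝ => 2 * Real.log t - t + t⁻¹) (2 / x - 1 - 1 / x ^ 2) x := by
  have h1 := ((Real.hasDerivAt_log hx).const_mul 2).sub (hasDerivAt_id x)
  have h2 := h1.add (hasDerivAt_inv hx)
  refine h2.congr_deriv ?_
  field_simp
  ring

private lemma psi_key {x : ℝ} (hx0 : 0 < x) (hx1 : x < 1) :
    x - 1 / x - 2 * Real.log x ≤ 0 := by
  have hanti : AntitoneOn (fun t : ℝ => 2 * Real.log t - t + t⁻¹) (Set.Ioc 0 1) := by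
    apply antitoneOn_of_deriv_nonpos (convex_Ioc 0 1)
    · intro t ht
      exact ((psi_hasDeriv (ne_of_gt ht.1)).continuousAt).continuousWithinAt
    · intro t ht
      rw [interior_Ioc] at ht
      exact ((psi_hasDeriv (ne_of_gt ht.1)).differentiableAt).differentiableWithinAt
    · intro t ht
      rw [interior_Ioc] at ht
      rw [(psi_hasDeriv (ne_of_gt ht.1)).deriv]
      have ht0 : (0:ℝ) < t := ht.1
      have heq : 2 / t - 1 - 1 / t ^ 2 = -((t - 1) ^ 2) / t ^ 2 := by
        field_simp; ring
      rw [heq]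
      apply div_nonpos_of_nonpos_of_nonneg
      · simpa using sq_nonneg (t - 1)
      · positivity
  have h := hanti (Set.mem_Ioc.2 ⟨hx0, le_of_lt hx1⟩) (Set.mem_Ioc.2 ⟨one_pos, le_refl 1⟩)
      (le_of_lt hx1)
  simp only [Real.log_one] at h
  have h2 : (0:ℝ) ≤ 2 * Real.log x - x + x⁻¹ := by simpa using h
  have hinv : x⁻¹ = 1 / x := (one_div x).symm
  linarith [h2, hinv ▸ h2]

private lemma G_hasDeriv {x : ℝ} (hx0 : 0 < x) (hx1 : x < 1) :
    HasDerivAt (fun t : ℝ => -(t * Real.log t) / (1 - t))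
      ((x - 1 - Real.log x) / (1 - x) ^ 2) x := by
  have hx : x ≠ 0 := ne_of_gt hx0
  have hx1' : (1 : ℝ) - x ≠ 0 := by intro h; linarith [(sub_eq_zero.mp h)]
  have hN : HasDerivAt (fun t : ℝ => -(t * Real.log t)) (-(Real.log x + 1)) x :=
    (Real.hasDerivAt_mul_log hx).neg
  have hD : HasDerivAt (fun t : ℝ => 1 - t) (-1) x := by
    simpa using (hasDerivAt_id x).const_sub 1
  have h := hN.div hD hx1'
  refine h.congr_deriv ?_
  field_simp
  ring

private lemma g1_hasDeriv {x : ℝ} (hx0 : 0 < x) (hx1 : x < 1) :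
    HasDerivAt (fun t : ℝ => (t - 1 - Real.log t) / (1 - t) ^ 2)
      ((x - 1 / x - 2 * Real.log x) / (1 - x) ^ 3) x := by
  have hx : x ≠ 0 := ne_of_gt hx0
  have hx1' : (1 : ℝ) - x ≠ 0 := by intro h; linarith [(sub_eq_zero.mp h)]
  have hA : HasDerivAt (fun t : ℝ => t - 1 - Real.log t) (1 - 1 / x) x := by
    have := ((hasDerivAt_id x).sub_const 1).sub (Real.hasDerivAt_log hx)
    exact this.congr_deriv (by rw [one_div])
  have hB : HasDerivAt (fun t : ℝ => (1 - t) ^ 2) (2 * (1 - x) * (-1)) x := by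
    have h1 : HasDerivAt (fun t : ℝ => 1 - t) (-1) x := by
      simpa using (hasDerivAt_id x).const_sub 1
    have := h1.pow 2
    refine this.congr_deriv ?_
    ring
  have h := hA.div hB (pow_ne_zero 2 hx1')
  refine h.congr_deriv ?_
  field_simp
  ring

theorem stmt_4 (f : ℝ → ℝ) (h0 : f 0 = 0) (h1 : f 1 = Real.logb 2 (Real.exp 1))
    (hf : ∀ t ∈ Set.Ioo (0:ℝ) 1, f t = (t / (1 - t)) * Real.logb 2 (1 / t)) :
    ConcaveOn ℝ (Set.Icc 0 1) f ∧
      ∀ a b : ℝ, 0 ≤ a → 0 ≤ b → a + b ≤ 1 → f (a + b) - f a ≤ f b := by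
  have hL : (0:ℝ) < Real.log 2 := Real.log_pos one_lt_two
  have hfeq : ∀ t ∈ Set.Ioo (0:ℝ) 1, f t = -(t * Real.log t) / (1 - t) / Real.log 2 := by
    intro t ht
    have ht1 : (1:ℝ) - t ≠ 0 := by intro h; linarith [(sub_eq_zero.mp h), ht.2]
    rw [hf t ht, Real.logb, one_div, Real.log_inv]
    field_simp
  have hfD : ∀ x ∈ Set.Ioo (0:ℝ) 1,
      HasDerivAt f ((x - 1 - Real.log x) / (1 - x) ^ 2 / Real.log 2) x := by
    intro x hx
    have h1 := (G_hasDeriv hx.1 hx.2).div_const (Real.log 2)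
    have heq : f =ᶠ[𝓝 x] fun t => -(t * Real.log t) / (1 - t) / Real.log 2 :=
      Filter.eventuallyEq_of_mem (isOpen_Ioo.mem_nhds hx) hfeq
    exact h1.congr_of_eventuallyEq heq
  have hderiv_eq : Set.EqOn (deriv f)
      (fun t => (t - 1 - Real.log t) / (1 - t) ^ 2 / Real.log 2) (Set.Ioo 0 1) :=
    fun x hx => (hfD x hx).deriv
  have hg1 : ∀ x ∈ Set.Ioo (0:ℝ) 1,
      HasDerivAt (fun t => (t - 1 - Real.log t) / (1 - t) ^ 2 / Real.log 2)
        ((x - 1 / x - 2 * Real.log x) / (1 - x) ^ 3 / Real.log 2) x :=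
    fun x hx => (g1_hasDeriv hx.1 hx.2).div_const _
  have hcont : ContinuousOn f (Set.Icc 0 1) := by
    intro x hx
    rcases eq_or_lt_of_le hx.1 with h0x | h0x
    · subst h0x
      have hGc : ContinuousAt (fun t : ℝ => -(t * Real.log t) / (1 - t) / Real.log 2) 0 := by
        apply ContinuousAt.div_const
        apply ContinuousAt.div
        · exact (Real.continuous_mul_log.neg).continuousAt
        · exact (continuous_const.sub continuous_id).continuousAt
        · norm_num
      have heq : f =ᶠ[𝓝[Set.Icc 0 1] (0:ℝ)]
          fun t => -(t * Real.log t) / (1 - t) / Real.log 2 := by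
        filter_upwards [self_mem_nhdsWithin,
          mem_nhdsWithin_of_mem_nhds (Iio_mem_nhds one_pos)] with t ht htlt
        rcases eq_or_lt_of_le ht.1 with h | h
        · rw [← h]; simp [h0]
        · exact hfeq t ⟨h, htlt⟩
      refine (hGc.continuousWithinAt).congr_of_eventuallyEq heq ?_
      simp [h0]
    · rcases eq_or_lt_of_le hx.2 with h1x | h1x
      · subst h1x
        have hf1 : f 1 = 1 / Real.log 2 := by rw [h1, Real.logb, Real.log_exp]
        rw [← continuousWithinAt_diff_self]
        have hslope : Filter.Tendsto (fun t : ℝ => Real.log t / (t - 1)) (𝓝[≠] (1:ℝ)) (𝓝 1) := by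
          have h := hasDerivAt_iff_tendsto_slope.mp (Real.hasDerivAt_log one_ne_zero)
          simp only [inv_one] at h
          refine h.congr fun t => ?_
          rw [slope_def_field, Real.log_one, sub_zero]
        have hlim : Filter.Tendsto (fun t : ℝ => t * (Real.log t / (t - 1)) / Real.log 2)
            (𝓝[≠] (1:ℝ)) (𝓝 (1 / Real.log 2)) := by
          have hid : Filter.Tendsto (fun t : ℝ => t) (𝓝[≠] (1:ℝ)) (𝓝 1) :=
            (continuous_id.tendsto 1).mono_left nhdsWithin_le_nhds
          have := (hid.mul hslope).div_const (Real.log 2)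
          simpa using this
        have hsub : 𝓝[Set.Icc 0 1 \ {1}] (1:ℝ) ≤ 𝓝[≠] (1:ℝ) :=
          nhdsWithin_mono 1 fun t ht => ht.2
        have heq : f =ᶠ[𝓝[Set.Icc 0 1 \ {1}] (1:ℝ)]
            fun t => t * (Real.log t / (t - 1)) / Real.log 2 := by
          filter_upwards [self_mem_nhdsWithin,
            mem_nhdsWithin_of_mem_nhds (Ioi_mem_nhds one_pos)] with t ht ht0
          have ht1 : t < 1 := lt_of_le_of_ne ht.1.2 (by simpa using ht.2)
          have h1t : t - 1 ≠ 0 := by intro h; linarith [(sub_eq_zero.mp h)]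
          have h1t2 : (1:ℝ) - t ≠ 0 := by intro h; linarith [(sub_eq_zero.mp h)]
          rw [hfeq t ⟨ht0, ht1⟩]
          congr 1
          field_simp [h1t2, h1t]
          ring
        have : Filter.Tendsto f (𝓝[Set.Icc 0 1 \ {1}] (1:ℝ)) (𝓝 (f 1)) := by
          rw [hf1]
          exact Filter.Tendsto.congr' heq.symm (hlim.mono_left hsub)
        exact this
      · exact ((hfD x ⟨h0x, h1x⟩).continuousAt).continuousWithinAt
  have hconc : ConcaveOn ℝ (Set.Icc 0 1) f := by
    apply concaveOn_of_deriv2_nonpos (convex_Icc 0 1) hcont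
    · rw [interior_Icc]
      exact fun x hx => (hfD x hx).differentiableAt.differentiableWithinAt
    · rw [interior_Icc]
      intro x hx
      have hev : deriv f =ᶠ[𝓝 x]
          (fun t => (t - 1 - Real.log t) / (1 - t) ^ 2 / Real.log 2) :=
        Filter.eventuallyEq_of_mem (isOpen_Ioo.mem_nhds hx) hderiv_eq
      exact ((hg1 x hx).differentiableAt.congr_of_eventuallyEq hev).differentiableWithinAt
    · rw [interior_Icc]
      intro x hx
      have hev : deriv f =ᶠ[𝓝 x]
          (fun t => (t - 1 - Real.log t) / (1 - t) ^ 2 / Real.log 2) :=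
        Filter.eventuallyEq_of_mem (isOpen_Ioo.mem_nhds hx) hderiv_eq
      have h2 : deriv^[2] f x = deriv (deriv f) x := by
        rw [Function.iterate_succ_apply', Function.iterate_one]
      rw [h2, hev.deriv_eq, (hg1 x hx).deriv]
      have hpsi := psi_key hx.1 hx.2
      have hx1 : (0:ℝ) < 1 - x := by linarith [hx.2]
      have h3 : (0:ℝ) < (1 - x) ^ 3 := by positivity
      exact div_nonpos_of_nonpos_of_nonneg
        (div_nonpos_of_nonpos_of_nonneg hpsi h3.le) hL.le
  refine ⟨hconc, ?_⟩
  intro a b ha hb hab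
  rcases eq_or_lt_of_le (add_nonneg ha hb) with hs | hs
  · have ha0 : a = 0 := by linarith
    have hb0 : b = 0 := by linarith
    simp [ha0, hb0, h0]
  · set s := a + b with hsdef
    have hsne : s ≠ 0 := ne_of_gt hs
    have hsmem : s ∈ Set.Icc (0:ℝ) 1 := ⟨le_of_lt hs, hab⟩
    have h0mem : (0:ℝ) ∈ Set.Icc (0:ℝ) 1 := ⟨le_refl 0, zero_le_one⟩
    have hsumA : a / s + b / s = 1 := by field_simp; exact hsdef.symm
    have hsumB : b / s + a / s = 1 := by rw [add_comm]; exact hsumA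
    have hA := hconc.2 hsmem h0mem (div_nonneg ha hs.le) (div_nonneg hb hs.le) hsumA
    have hB := hconc.2 hsmem h0mem (div_nonneg hb hs.le) (div_nonneg ha hs.le) hsumB
    simp only [smul_eq_mul, mul_zero, add_zero, h0] at hA hB
    rw [div_mul_cancel₀ a hsne] at hA
    rw [div_mul_cancel₀ b hsne] at hB
    have hfs : f s = a / s * f s + b / s * f s := by
      rw [← add_mul, hsumA, one_mul]
    linarith
end

section
/- Let G be a finite simple graph on vertex set V and let K be its bipartite double cover, the bipartite graph on V × {0,1} with edges {(x,0),(y,1)} for each edge {x,y} of G. Then for every integer ℓ ≥ 0, (number of matchings of size ℓ in G)² ≤ number of matchings of size 2ℓ in K. -/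
open Equiv

lemma two_color {X : Type*} (a b : Equiv.Perm X) (ha : a * a = 1) (hb : b * b = 1)
    (ha' : ∀ x, a x ≠ x) (hb' : ∀ x, b x ≠ x) :
    ∃ t : X → Bool, (∀ x, t (a x) ≠ t x) ∧ (∀ x, t (b x) ≠ t x) := by
  classical
  set π : Equiv.Perm X := a * b with hπ
  have hainv : a⁻¹ = a := by rw [inv_eq_iff_mul_eq_one]; exact ha
  have hbinv : b⁻¹ = b := by rw [inv_eq_iff_mul_eq_one]; exact hb
  have hA : ∀ x, a (a x) = x := by
    intro x; have := congrArg (fun p : Equiv.Perm X => p x) ha; simpa using this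
  have hB : ∀ x, b (b x) = x := by
    intro x; have := congrArg (fun p : Equiv.Perm X => p x) hb; simpa using this
  have hconj : ∀ k : ℤ, a * π ^ k * a = π ^ (-k) := by
    intro k
    have h1 : (MulAut.conj a) (π ^ k) = ((MulAut.conj a) π) ^ k := map_zpow _ _ _
    have h2 : (MulAut.conj a) π = π⁻¹ := by
      simp only [MulAut.conj_apply, hainv, hπ]
      rw [mul_inv_rev, hainv, hbinv, ← mul_assoc, ha, one_mul]
    rw [h2, ← zpow_neg_one, ← zpow_mul, neg_one_mul] at h1
    simpa [MulAut.conj_apply, hainv] using h1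
  have hc : ∀ (k : ℤ) (x : X), a ((π ^ k) (a x)) = (π ^ (-k)) x := by
    intro k x
    have := congrArg (fun p : Equiv.Perm X => p x) (hconj k)
    simpa using this
  have hc' : ∀ (k : ℤ) (x : X), (π ^ k) (a x) = a ((π ^ (-k)) x) := by
    intro k x
    have := hc k x
    have := congrArg a this
    rwa [hA] at this
  have hadd : ∀ (j k : ℤ) (x : X), (π ^ (j + k)) x = (π ^ j) ((π ^ k) x) := by
    intro j k x; rw [zpow_add]; rfl
  -- key: a ∘ π^m has no fixed point
  have hkey : ∀ (m : ℤ) (x : X), a ((π ^ m) x) ≠ x := by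
    intro m x hfix
    rcases Int.even_or_odd m with ⟨q, hq⟩ | ⟨q, hq⟩
    · subst hq
      set y := (π ^ q) x with hy
      have h1 : (π ^ (q + q)) x = (π ^ q) y := by rw [hadd]
      have h2 : a ((π ^ q) y) = (π ^ (-q)) (a y) := by
        have := hc q (a y); rwa [hA] at this
      rw [h1, h2] at hfix
      have h3 : (π ^ q) x = a y := by
        have := congrArg (fun z => (π ^ q) z) hfix
        rw [← hadd, add_neg_cancel] at this
        simp at this
        rw [← this]
      exact ha' y (by rw [← h3])
    · subst hq
      set y := (π ^ q) x with hy
      set w := π y with hw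
      have h1 : (π ^ (2 * q + 1)) x = (π ^ q) w := by
        rw [show (2 : ℤ) * q + 1 = q + (1 + q) by ring, hadd, hadd]
        simp [hw, hy, zpow_one]
      have h2 : a ((π ^ q) w) = (π ^ (-q)) (a w) := by
        have := hc q (a w); rwa [hA] at this
      rw [h1, h2] at hfix
      have h3 : (π ^ q) x = a w := by
        have := congrArg (fun z => (π ^ q) z) hfix
        rw [← hadd, add_neg_cancel] at this
        simp at this
        rw [← this]
      have h4 : y = a (π y) := by rw [← hw, ← h3]
      have h5 : a (π y) = b y := by
        have : π y = a (b y) := rfl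
        rw [this, hA]
      exact hb' y (by rw [← h5, ← h4])
  -- orbit relation
  set r : X → X → Prop := fun v w =>
    (∃ k : ℤ, (π ^ k) v = w) ∨ (∃ k : ℤ, (π ^ k) (a v) = w) with hr
  have hrefl : ∀ v, r v v := fun v => Or.inl ⟨0, by simp⟩
  have hsymm : ∀ {v w}, r v w → r w v := by
    rintro v w (⟨k, hk⟩ | ⟨k, hk⟩)
    · exact Or.inl ⟨-k, by rw [← hk, ← hadd]; simp⟩
    · refine Or.inr ⟨k, ?_⟩
      have haw : a w = (π ^ (-k)) v := by
        rw [← hk, hc]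
      rw [haw, ← hadd]
      simp
  have htrans : ∀ {v w u}, r v w → r w u → r v u := by
    rintro v w u (⟨j, hj⟩ | ⟨j, hj⟩) (⟨k, hk⟩ | ⟨k, hk⟩)
    · exact Or.inl ⟨k + j, by rw [hadd, hj, hk]⟩
    · refine Or.inr ⟨k + -j, ?_⟩
      have haw : a w = (π ^ (-j)) (a v) := by
        rw [← hj, hc', neg_neg]
      rw [hadd, ← haw, hk]
    · exact Or.inr ⟨k + j, by rw [hadd, hj, hk]⟩
    · refine Or.inl ⟨k + -j, ?_⟩
      have haw : a w = (π ^ (-j)) v := by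
        rw [← hj, hc]
      rw [hadd, ← haw, hk]
  letI s : Setoid X := ⟨r, ⟨hrefl, fun h => hsymm h, fun h h' => htrans h h'⟩⟩
  let q : X → X := fun v => (Quotient.mk s v).out
  have hq : ∀ v, r (q v) v := fun v => Quotient.mk_out v
  have hqeq : ∀ {v w}, r v w → q v = q w := by
    intro v w h
    show (Quotient.mk s v).out = (Quotient.mk s w).out
    rw [Quotient.sound h]
  have hqa : ∀ v, q (a v) = q v := fun v =>
    (hqeq (Or.inr ⟨0, by simp⟩)).symm
  have hqb : ∀ v, q (b v) = q v := by
    intro v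
    refine (hqeq (Or.inr ⟨-1, ?_⟩)).symm
    show (π ^ (-1 : ℤ)) (a v) = b v
    rw [hc']
    simp only [neg_neg, zpow_one]
    show a (a (b v)) = b v
    rw [hA]
  -- exactly one of: v in P(q v), a v in P(q v)
  have hone : ∀ v, ((∃ k : ℤ, (π ^ k) (q v) = v) ∨ (∃ k : ℤ, (π ^ k) (q v) = a v)) := by
    intro v
    rcases hq v with ⟨k, hk⟩ | ⟨k, hk⟩
    · exact Or.inl ⟨k, hk⟩
    · refine Or.inr ⟨-k, ?_⟩
      have := congrArg a hk
      rw [hc] at this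
      exact this
  have hnotboth : ∀ v, ¬ ((∃ k : ℤ, (π ^ k) (q v) = v) ∧ (∃ k : ℤ, (π ^ k) (q v) = a v)) := by
    rintro v ⟨⟨j, hj⟩, ⟨k, hk⟩⟩
    have hj' : (π ^ (-j)) v = q v := by
      conv_lhs => rw [← hj]
      rw [← hadd, neg_add_cancel, zpow_zero]; simp
    have : (π ^ (k + -j)) v = a v := by rw [hadd, hj', hk]
    exact hkey (k + -j) v (by rw [this, hA])
  refine ⟨fun v => decide (∃ k : ℤ, (π ^ k) (q v) = a v), ?_, ?_⟩
  · intro v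
    have h1 : q (a v) = q v := hqa v
    by_cases h : ∃ k : ℤ, (π ^ k) (q v) = a v
    · have h2 : ¬ ∃ k : ℤ, (π ^ k) (q (a v)) = a (a v) := by
        rw [h1, hA]
        intro h'
        exact hnotboth v ⟨h', h⟩
      simp [h, h2]
    · have h2 : ∃ k : ℤ, (π ^ k) (q (a v)) = a (a v) := by
        rw [h1, hA]
        rcases hone v with h' | h'
        · exact h'
        · exact absurd h' h
      simp [h, h2]
  · intro v
    have h1 : q (b v) = q v := hqb v
    have habv : a (b v) = π v := by
      show a (b v) = a (b v); rfl
    have hshift : (∃ k : ℤ, (π ^ k) (q v) = π v) ↔ (∃ k : ℤ, (π ^ k) (q v) = v) := by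
      constructor
      · rintro ⟨k, hk⟩
        refine ⟨-1 + k, ?_⟩
        rw [hadd, hk]
        show (π ^ (-1 : ℤ)) (π v) = v
        rw [show (π : Equiv.Perm X) v = (π ^ (1:ℤ)) v by simp, ← hadd]
        simp
      · rintro ⟨k, hk⟩
        refine ⟨1 + k, ?_⟩
        rw [hadd, hk]
        simp
    by_cases h : ∃ k : ℤ, (π ^ k) (q v) = a v
    · have h2 : ¬ ∃ k : ℤ, (π ^ k) (q (b v)) = a (b v) := by
        rw [h1, habv]
        intro h'
        exact hnotboth v ⟨hshift.mp h', h⟩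
      simp [h, h2]
    · have h2 : ∃ k : ℤ, (π ^ k) (q (b v)) = a (b v) := by
        rw [h1, habv]
        rcases hone v with h' | h'
        · exact hshift.mpr h'
        · exact absurd h' h
      simp [h, h2]


/-- `m` is a set of pairwise disjoint edges of `G`. -/
def IsMatchingSet {V : Type*} (G : SimpleGraph V) (m : Finset (Sym2 V)) : Prop :=
  (↑m ⊆ G.edgeSet) ∧ ∀ e ∈ m, ∀ f ∈ m, e ≠ f → ∀ v : V, v ∈ e → v ∉ f

section partner
variable {V : Type*} [DecidableEq V]

open Classical in
noncomputable def matchPartner (M : Finset (Sym2 V)) (x : V) : V :=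
  if h : ∃ y, s(x, y) ∈ M then h.choose else x

variable {G : SimpleGraph V} {M : Finset (Sym2 V)}

lemma matchPartner_eq (hM : IsMatchingSet G M) {x y : V} (h : s(x, y) ∈ M) :
    matchPartner M x = y := by
  classical
  have hex : ∃ y, s(x, y) ∈ M := ⟨y, h⟩
  have hy' : s(x, hex.choose) ∈ M := hex.choose_spec
  rw [matchPartner, dif_pos hex]
  by_contra hne
  have hedges : s(x, hex.choose) ≠ s(x, y) := by
    intro he
    rcases Sym2.eq_iff.mp he with ⟨_, h2⟩ | ⟨h1, h2⟩
    · exact hne h2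
    · exact hne (h2.trans h1)
  exact hM.2 _ hy' _ h hedges x (Sym2.mem_mk_left _ _) (Sym2.mem_mk_left _ _)

lemma matchPartner_mem (hM : IsMatchingSet G M) {x : V} (h : ∃ y, s(x, y) ∈ M) :
    s(x, matchPartner M x) ∈ M := by
  obtain ⟨y, hy⟩ := h
  rwa [matchPartner_eq hM hy]

lemma matchPartner_invol (hM : IsMatchingSet G M) (x : V) :
    matchPartner M (matchPartner M x) = x := by
  classical
  by_cases h : ∃ y, s(x, y) ∈ M
  · have h1 : s(x, matchPartner M x) ∈ M := matchPartner_mem hM h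
    have h2 : s(matchPartner M x, x) ∈ M := by rwa [Sym2.eq_swap]
    exact matchPartner_eq hM h2
  · have hx : matchPartner M x = x := by rw [matchPartner, dif_neg h]
    rw [hx, hx]

lemma matchPartner_ne (hM : IsMatchingSet G M) {x y : V} (h : s(x, y) ∈ M) :
    matchPartner M x ≠ x := by
  rw [matchPartner_eq hM h]
  intro he
  subst he
  exact G.not_isDiag_of_mem_edgeSet (hM.1 h) (by simp)

/-- the doubled involution associated to a partial involution -/
def sumInvolFun (p : V → V) : V ⊕ V → V ⊕ V :=
  Sum.elim (fun x => if p x = x then Sum.inr x else Sum.inl (p x))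
    (fun x => if p x = x then Sum.inl x else Sum.inr (p x))

lemma sumInvolFun_invol {p : V → V} (hp : ∀ x, p (p x) = x) :
    Function.Involutive (sumInvolFun p) := by
  rintro (x | x) <;> by_cases h : p x = x
  · simp [sumInvolFun, h]
  · have h3 : p (p x) ≠ p x := by rw [hp x]; exact fun hc => h hc.symm
    simp [sumInvolFun, h, h3, hp x]
    exact fun hc => h hc.symm
  · simp [sumInvolFun, h]
  · have h3 : p (p x) ≠ p x := by rw [hp x]; exact fun hc => h hc.symm
    simp [sumInvolFun, h, h3, hp x]
    exact fun hc => h hc.symm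

lemma sumInvolFun_ne (p : V → V) (z : V ⊕ V) : sumInvolFun p z ≠ z := by
  rcases z with x | x <;> by_cases h : p x = x <;> simp [sumInvolFun, h]

lemma exists_proper_coloring (hM : IsMatchingSet G M) {N : Finset (Sym2 V)}
    (hN : IsMatchingSet G N) :
    ∃ t : V → Bool, ∀ x y : V, s(x, y) ∈ M ∪ N → t x ≠ t y := by
  classical
  have hfainv := sumInvolFun_invol (matchPartner_invol hM)
  have hfbinv := sumInvolFun_invol (matchPartner_invol hN)
  set a : Equiv.Perm (V ⊕ V) := hfainv.toPerm with haP
  set b : Equiv.Perm (V ⊕ V) := hfbinv.toPerm with hbP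
  have haa : a * a = 1 := by ext z; exact hfainv z
  have hbb : b * b = 1 := by ext z; exact hfbinv z
  obtain ⟨t', ht'a, ht'b⟩ := two_color a b haa hbb
    (fun z => sumInvolFun_ne _ z) (fun z => sumInvolFun_ne _ z)
  refine ⟨fun x => t' (Sum.inl x), ?_⟩
  intro x y hxy
  rcases Finset.mem_union.mp hxy with h | h
  · have h1 : matchPartner M x = y := matchPartner_eq hM h
    have h2 : matchPartner M x ≠ x := matchPartner_ne hM h
    have h3 : a (Sum.inl x) = Sum.inl y := by
      show sumInvolFun (matchPartner M) (Sum.inl x) = Sum.inl y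
      simp only [sumInvolFun, Sum.elim_inl, if_neg h2, h1]
      rw [if_neg (fun hc => h2 (h1.trans hc))]
    have := ht'a (Sum.inl x)
    rw [h3] at this
    exact fun hc => this hc.symm
  · have h1 : matchPartner N x = y := matchPartner_eq hN h
    have h2 : matchPartner N x ≠ x := matchPartner_ne hN h
    have h3 : b (Sum.inl x) = Sum.inl y := by
      show sumInvolFun (matchPartner N) (Sum.inl x) = Sum.inl y
      simp only [sumInvolFun, Sum.elim_inl, if_neg h2, h1]
      rw [if_neg (fun hc => h2 (h1.trans hc))]
    have := ht'b (Sum.inl x)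
    rw [h3] at this
    exact fun hc => this hc.symm

end partner


section enc
variable {V : Type*} [DecidableEq V]

open Classical in
noncomputable def tcol (H : Finset (Sym2 V)) : V → Bool :=
  if h : ∃ t : V → Bool, ∀ x y : V, s(x, y) ∈ H → t x ≠ t y then h.choose else fun _ => false

lemma tcol_proper {H : Finset (Sym2 V)}
    (h : ∃ t : V → Bool, ∀ x y : V, s(x, y) ∈ H → t x ≠ t y) :
    ∀ x y : V, s(x, y) ∈ H → tcol H x ≠ tcol H y := by
  classical
  rw [tcol, dif_pos h]
  exact h.choose_spec

noncomputable def encPair (M N : Finset (Sym2 V)) : Finset (Sym2 (V × Bool)) :=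
  M.image (fun e => e.map (fun v => (v, tcol (M ∪ N) v))) ∪
    N.image (fun e => e.map (fun v => (v, !tcol (M ∪ N) v)))

lemma slot_inj (c : V → Bool) : Function.Injective (fun v => (v, c v)) := by
  intro x y h
  exact congrArg Prod.fst h

lemma map_slot_proj (c : V → Bool) (e : Sym2 V) :
    Sym2.map Prod.fst (Sym2.map (fun v => (v, c v)) e) = e := by
  rw [Sym2.map_map]
  have : (Prod.fst ∘ fun v : V => (v, c v)) = id := rfl
  rw [this, Sym2.map_id, id_eq]

lemma mem_map_slot {c : V → Bool} {e : Sym2 V} {w : V} {bb : Bool}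
    (h : (w, bb) ∈ Sym2.map (fun v => (v, c v)) e) : w ∈ e ∧ bb = c w := by
  rcases Sym2.mem_map.mp h with ⟨u, hu, he⟩
  have hw : u = w := congrArg Prod.fst he
  subst hw
  exact ⟨hu, (congrArg Prod.snd he).symm⟩

lemma cross_slot {e f : Sym2 V} {c d : V → Bool} (hcd : ∀ v, c v ≠ d v)
    (hf : ¬ f.IsDiag) :
    Sym2.map (fun v => (v, c v)) e ≠ Sym2.map (fun v => (v, d v)) f := by
  intro heq
  have hef : e = f := by
    have := congrArg (Sym2.map Prod.fst) heq
    rwa [map_slot_proj, map_slot_proj] at this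
  subst hef
  induction e using Sym2.ind with
  | _ x y =>
    rw [Sym2.map_pair_eq, Sym2.map_pair_eq, Sym2.eq_iff] at heq
    rcases heq with ⟨h1, _⟩ | ⟨h1, _⟩
    · exact hcd x (congrArg Prod.snd h1)
    · exact hf (by rw [Sym2.mk_isDiag_iff]; exact congrArg Prod.fst h1)

lemma encPair_proj (M N : Finset (Sym2 V)) :
    (encPair M N).image (Sym2.map Prod.fst) = M ∪ N := by
  rw [encPair, Finset.image_union, Finset.image_image, Finset.image_image]
  congr 1
  · conv_rhs => rw [← Finset.image_id (s := M)]
    apply Finset.image_congr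
    intro e _
    exact map_slot_proj _ e
  · conv_rhs => rw [← Finset.image_id (s := N)]
    apply Finset.image_congr
    intro e _
    exact map_slot_proj _ e

end enc


section main
variable {V : Type*} [DecidableEq V] {G : SimpleGraph V}

lemma not_isDiag_of_matching {M : Finset (Sym2 V)} (hM : IsMatchingSet G M)
    {e : Sym2 V} (he : e ∈ M) : ¬ e.IsDiag :=
  G.not_isDiag_of_mem_edgeSet (hM.1 he)

lemma tcol_union_proper {M N : Finset (Sym2 V)} (hM : IsMatchingSet G M)
    (hN : IsMatchingSet G N) :
    ∀ x y : V, s(x, y) ∈ M ∪ N → tcol (M ∪ N) x ≠ tcol (M ∪ N) y :=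
  tcol_proper (exists_proper_coloring hM hN)

lemma encPair_card {M N : Finset (Sym2 V)} (hN : IsMatchingSet G N) :
    (encPair M N).card = M.card + N.card := by
  rw [encPair, Finset.card_union_of_disjoint, Finset.card_image_of_injective _
      (Sym2.map.injective (slot_inj _)), Finset.card_image_of_injective _
      (Sym2.map.injective (slot_inj _))]
  rw [Finset.disjoint_left]
  rintro z hz1 hz2
  rcases Finset.mem_image.mp hz1 with ⟨e, _, he⟩
  rcases Finset.mem_image.mp hz2 with ⟨f, hf, hfe⟩
  exact cross_slot (fun v => (Bool.not_ne_self (tcol (M ∪ N) v)).symm)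
    (not_isDiag_of_matching hN hf) (he.trans hfe.symm)

lemma encPair_matching {K : SimpleGraph (V × Bool)}
    (hK : ∀ p q : V × Bool, K.Adj p q ↔ G.Adj p.1 q.1 ∧ p.2 ≠ q.2)
    {M N : Finset (Sym2 V)} (hM : IsMatchingSet G M) (hN : IsMatchingSet G N) :
    IsMatchingSet K (encPair M N) := by
  classical
  set t := tcol (M ∪ N) with ht
  have hprop := tcol_union_proper hM hN
  constructor
  · intro z hz
    rcases Finset.mem_union.mp hz with hz | hz
    · rcases Finset.mem_image.mp hz with ⟨e, he, rfl⟩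
      induction e using Sym2.ind with
      | _ x y =>
        rw [Sym2.map_pair_eq]
        rw [SimpleGraph.mem_edgeSet, hK]
        refine ⟨hM.1 he, ?_⟩
        have := hprop x y (Finset.mem_union_left _ he)
        simpa using this
    · rcases Finset.mem_image.mp hz with ⟨e, he, rfl⟩
      induction e using Sym2.ind with
      | _ x y =>
        rw [Sym2.map_pair_eq]
        rw [SimpleGraph.mem_edgeSet, hK]
        refine ⟨hN.1 he, ?_⟩
        have := hprop x y (Finset.mem_union_right _ he)
        simpa using this
  · rintro z1 hz1 z2 hz2 hne ⟨w, bb⟩ hv1 hv2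
    rcases Finset.mem_union.mp hz1 with h1 | h1 <;>
      rcases Finset.mem_union.mp hz2 with h2 | h2 <;>
      rcases Finset.mem_image.mp h1 with ⟨e, he, rfl⟩ <;>
      rcases Finset.mem_image.mp h2 with ⟨f, hf, rfl⟩
    · obtain ⟨hwe, -⟩ := mem_map_slot hv1
      obtain ⟨hwf, -⟩ := mem_map_slot hv2
      have hef : e ≠ f := fun hc => hne (by rw [hc])
      exact hM.2 e he f hf hef w hwe hwf
    · obtain ⟨-, hb1⟩ := mem_map_slot hv1
      obtain ⟨-, hb2⟩ := mem_map_slot hv2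
      rw [hb1] at hb2
      exact Bool.not_ne_self (t w) hb2.symm
    · obtain ⟨-, hb1⟩ := mem_map_slot hv1
      obtain ⟨-, hb2⟩ := mem_map_slot hv2
      rw [hb1] at hb2
      exact Bool.not_ne_self (t w) hb2
    · obtain ⟨hwe, -⟩ := mem_map_slot hv1
      obtain ⟨hwf, -⟩ := mem_map_slot hv2
      have hef : e ≠ f := fun hc => hne (by rw [hc])
      exact hN.2 e he f hf hef w hwe hwf

lemma mem_encPair_left {M N : Finset (Sym2 V)} (hM : IsMatchingSet G M)
    (hN : IsMatchingSet G N) (e : Sym2 V) :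
    e ∈ M ↔ Sym2.map (fun v => (v, tcol (M ∪ N) v)) e ∈ encPair M N := by
  constructor
  · intro h
    exact Finset.mem_union_left _ (Finset.mem_image.mpr ⟨e, h, rfl⟩)
  · intro h
    rcases Finset.mem_union.mp h with h | h
    · rcases Finset.mem_image.mp h with ⟨e', he', heq⟩
      rwa [Sym2.map.injective (slot_inj _) heq] at he'
    · rcases Finset.mem_image.mp h with ⟨f, hf, heq⟩
      exact absurd heq.symm (cross_slot
          (fun v => (Bool.not_ne_self (tcol (M ∪ N) v)).symm)
          (not_isDiag_of_matching hN hf))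
-- need care: cross_slot c := tcol, d := !tcol gives map_c e ≠ map_d f; heq : map_d f = map_c e
lemma mem_encPair_right {M N : Finset (Sym2 V)} (hM : IsMatchingSet G M)
    (hN : IsMatchingSet G N) (e : Sym2 V) :
    e ∈ N ↔ Sym2.map (fun v => (v, !tcol (M ∪ N) v)) e ∈ encPair M N := by
  constructor
  · intro h
    exact Finset.mem_union_right _ (Finset.mem_image.mpr ⟨e, h, rfl⟩)
  · intro h
    rcases Finset.mem_union.mp h with h | h
    · rcases Finset.mem_image.mp h with ⟨f, hf, heq⟩
      exact absurd heq.symm (cross_slot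
          (fun v => Bool.not_ne_self (tcol (M ∪ N) v))
          (not_isDiag_of_matching hM hf))
    · rcases Finset.mem_image.mp h with ⟨e', he', heq⟩
      rwa [Sym2.map.injective (slot_inj _) heq] at he'

end main


theorem stmt_9 {V : Type*} [Fintype V] [DecidableEq V] (G : SimpleGraph V)
    (K : SimpleGraph (V × Bool))
    (hK : ∀ p q : V × Bool, K.Adj p q ↔ G.Adj p.1 q.1 ∧ p.2 ≠ q.2)
    (ℓ : ℕ) :
    (Set.ncard {m : Finset (Sym2 V) | IsMatchingSet G m ∧ m.card = ℓ}) ^ 2 ≤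
      Set.ncard {m : Finset (Sym2 (V × Bool)) | IsMatchingSet K m ∧ m.card = 2 * ℓ} := by
  classical
  set A : Set (Finset (Sym2 V)) := {m | IsMatchingSet G m ∧ m.card = ℓ} with hA
  set B : Set (Finset (Sym2 (V × Bool))) := {m | IsMatchingSet K m ∧ m.card = 2 * ℓ} with hB
  have hsq : A.ncard ^ 2 = (A ×ˢ A).ncard := by
    rw [← Nat.card_coe_set_eq, ← Nat.card_coe_set_eq,
      Nat.card_congr (Equiv.Set.prod A A), Nat.card_prod, sq]
  rw [hsq]
  refine Set.ncard_le_ncard_of_injOn (fun p => encPair p.1 p.2) ?_ ?_ (Set.toFinite _)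
  · rintro ⟨M, N⟩ hp
    rw [Set.mem_prod] at hp
    obtain ⟨⟨hM, hMc⟩, ⟨hN, hNc⟩⟩ := hp
    refine ⟨encPair_matching hK hM hN, ?_⟩
    rw [encPair_card hN, hMc, hNc]
    ring
  · rintro ⟨M, N⟩ hp ⟨M', N'⟩ hq heq
    rw [Set.mem_prod] at hp hq
    obtain ⟨⟨hM, -⟩, ⟨hN, -⟩⟩ := hp
    obtain ⟨⟨hM', -⟩, ⟨hN', -⟩⟩ := hq
    have heq' : encPair M N = encPair M' N' := heq
    have hU : M ∪ N = M' ∪ N' := by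
      rw [← encPair_proj M N, ← encPair_proj M' N', heq']
    have hMM : M = M' := by
      ext e
      have h1 := mem_encPair_left hM hN e
      rw [hU, heq'] at h1
      rw [h1, mem_encPair_left hM' hN' e]
    have hNN : N = N' := by
      ext e
      have h1 := mem_encPair_right hM hN e
      rw [hU, heq'] at h1
      rw [h1, mem_encPair_right hM' hN' e]
    exact Prod.ext hMM hNN
end
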